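/- Let G be an amply regular graph with parameters (n, d, α, β), let x and y be adjacent vertices, and let v ∈ N_x. If v has exactly ℓ neighbors in N_y, then v has exactly α − β + 1 + ℓ neighbors in N_x. -/

import Mathlib

theorem neighbors_in_N_x
    {V : Type*} [Fintype V] [DecidableEq V] (G : SimpleGraph V) [DecidableRel G.Adj]
    (n d α β ℓ : ℕ)
    (hn : Fintype.card V = n)
    (hreg : G.IsRegularOfDegree d)
    (hadj : ∀ v w : V, G.Adj v w → Fintype.card (G.commonNeighbors v w) = α)
    (hdist : ∀ v w : V, G.dist v w = 2 → Fintype.card (G.commonNeighbors v w) = β)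
    (x y v : V) (hxy : G.Adj x y)
    (hv : G.Adj x v ∧ ¬ G.Adj y v ∧ v ≠ y)
    (hℓ : (Finset.univ.filter
      (fun z => (G.Adj y z ∧ ¬ G.Adj x z ∧ z ≠ x) ∧ G.Adj v z)).card = ℓ) :
    ((Finset.univ.filter
      (fun z => (G.Adj x z ∧ ¬ G.Adj y z ∧ z ≠ y) ∧ G.Adj v z)).card : ℤ)
      = (α : ℤ) - β + 1 + ℓ := by
  classical
  obtain ⟨hxv, hyv, hvy⟩ := hv
  -- distance from y to v is 2
  have hdyv : G.dist y v = 2 := by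
    have hle := SimpleGraph.dist_le
      (SimpleGraph.Walk.cons hxy.symm (SimpleGraph.Walk.cons hxv SimpleGraph.Walk.nil))
    simp only [SimpleGraph.Walk.length_cons, SimpleGraph.Walk.length_nil] at hle
    have hne0 : G.dist y v ≠ 0 := by
      intro h
      have hr : G.Reachable y v :=
        ⟨SimpleGraph.Walk.cons hxy.symm (SimpleGraph.Walk.cons hxv SimpleGraph.Walk.nil)⟩
      exact hvy ((SimpleGraph.Reachable.dist_eq_zero_iff hr).mp h).symm
    have hne1 : G.dist y v ≠ 1 := by
      intro h
      exact hyv ((SimpleGraph.dist_eq_one_iff_adj).mp h)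
    omega
  set S : Finset V := Finset.univ.filter (fun z => G.Adj x z ∧ G.Adj v z) with hS
  set T : Finset V := Finset.univ.filter (fun z => G.Adj y z ∧ G.Adj v z) with hT
  set D : Finset V := Finset.univ.filter (fun z => G.Adj x z ∧ G.Adj v z ∧ G.Adj y z) with hD
  set L : Finset V := Finset.univ.filter
      (fun z => (G.Adj y z ∧ ¬ G.Adj x z ∧ z ≠ x) ∧ G.Adj v z) with hL
  set Tgt : Finset V := Finset.univ.filter
      (fun z => (G.Adj x z ∧ ¬ G.Adj y z ∧ z ≠ y) ∧ G.Adj v z) with hTgt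
  -- card S = α
  have hScard : S.card = α := by
    have h1 := hadj x v hxv
    rw [← h1, ← Set.toFinset_card]
    congr 1
    ext z
    rw [Set.mem_toFinset]
    simp [SimpleGraph.commonNeighbors, SimpleGraph.neighborSet, hS]
  -- card T = β
  have hTcard : T.card = β := by
    have h1 := hdist y v hdyv
    rw [← h1, ← Set.toFinset_card]
    congr 1
    ext z
    rw [Set.mem_toFinset]
    simp [SimpleGraph.commonNeighbors, SimpleGraph.neighborSet, hT]
  -- split S by adjacency to y : S = D ⊎ Tgt
  have hSsplit : S.card = D.card + Tgt.card := by
    rw [← Finset.card_filter_add_card_filter_not (s := S) (p := fun z => G.Adj y z)]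
    congr 1
    · rw [hS, hD, Finset.filter_filter]
      congr 1
      ext z
      simp only [Finset.mem_filter, Finset.mem_univ, true_and]
      tauto
    · rw [hS, hTgt, Finset.filter_filter]
      congr 1
      ext z
      simp only [Finset.mem_filter, Finset.mem_univ, true_and]
      constructor
      · rintro ⟨⟨h1, h2⟩, h3⟩
        refine ⟨⟨h1, h3, ?_⟩, h2⟩
        rintro rfl
        exact hyv h2.symm
      · rintro ⟨⟨h1, h3, _⟩, h2⟩
        exact ⟨⟨h1, h2⟩, h3⟩
  -- split T by adjacency to x : T = D ⊎ (insert x L)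
  have hxnotL : x ∉ L := by simp [hL]
  have hTsplit : T.card = D.card + (L.card + 1) := by
    rw [← Finset.card_filter_add_card_filter_not (s := T) (p := fun z => G.Adj x z)]
    congr 1
    · rw [hT, hD, Finset.filter_filter]
      congr 1
      ext z
      simp only [Finset.mem_filter, Finset.mem_univ, true_and]
      tauto
    · have heq : T.filter (fun z => ¬ G.Adj x z) = insert x L := by
        ext z
        simp only [hT, hL, Finset.filter_filter, Finset.mem_filter, Finset.mem_univ, true_and,
          Finset.mem_insert]
        constructor
        · rintro ⟨⟨h1, h2⟩, h3⟩
          by_cases hzx : z = x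
          · exact Or.inl hzx
          · exact Or.inr ⟨⟨h1, h3, hzx⟩, h2⟩
        · rintro (rfl | ⟨⟨h1, h3, _⟩, h2⟩)
          · exact ⟨⟨hxy.symm, hxv.symm⟩, G.loopless.irrefl _⟩
          · exact ⟨⟨h1, h2⟩, h3⟩
      rw [heq, Finset.card_insert_of_notMem hxnotL]
  have hLcard : L.card = ℓ := hℓ
  have h1 : (α : ℤ) = D.card + Tgt.card := by rw [← hScard, hSsplit]; push_cast; ring
  have h2 : (β : ℤ) = D.card + (ℓ + 1) := by
    rw [← hTcard, hTsplit, hLcard]; push_cast; ring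
  show (Tgt.card : ℤ) = (α : ℤ) - β + 1 + ℓ
  omega
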